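/- Let $D\in\mathcal P^1(X)$ and assume the sequence of substitutions $(S_{a_n})$ is primitive. Then for every $n>0$ there exist $R>0$ and $N_0>n$ such that for every $N>N_0$ and every closed ball $B$ of radius $R$ contained in $\operatorname{supp}(S^N_{\bar a}(D))$, there is $\vec t\in\mathbb R^d$ with $\vec t+S^n_{\bar a}(D)\subseteq S^N_{\bar a}(D)$ and $\operatorname{supp}(\vec t+S^n_{\bar a}(D))\subseteq B$. -/

import Mathlib

open Filter Topology Set Metric MeasureTheory

noncomputable section

/-- Points of `ℝ^d`. -/
abbrev Pt (d : ℕ) := EuclideanSpace ℝ (Fin d)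

/-- A patch is a collection of subsets of `ℝ^d` (intended: tiles with disjoint interiors). -/
abbrev Patch (d : ℕ) := Set (Set (Pt d))

/-- Translation of a single tile. -/
def tileTrans {d : ℕ} (t : Pt d) (D : Set (Pt d)) : Set (Pt d) := (fun p => t + p) '' D

/-- Translation of a patch, `t + x`. -/
def patchTrans {d : ℕ} (t : Pt d) (x : Patch d) : Patch d := tileTrans t '' x

/-- A tile: compact, connected, and the closure of its interior. -/
def IsTile {d : ℕ} (D : Set (Pt d)) : Prop :=
  IsCompact D ∧ IsConnected D ∧ D = closure (interior D)

/-- A patch: a collection of tiles with pairwise disjoint interiors. -/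
def IsPatch {d : ℕ} (x : Patch d) : Prop :=
  (∀ D ∈ x, IsTile D) ∧
  ∀ D ∈ x, ∀ D' ∈ x, D ≠ D' → interior D ∩ interior D' = ∅

/-- The support of a patch: the union of its tiles. -/
def psupp {d : ℕ} (x : Patch d) : Set (Pt d) := ⋃ D ∈ x, D

/-- A tiling of `ℝ^d`: a patch whose support is all of `ℝ^d`. -/
def IsTiling {d : ℕ} (x : Patch d) : Prop := IsPatch x ∧ psupp x = univ

/-- The tiles occurring in tilings of `X`. -/
def TilesOf {d : ℕ} (X : Set (Patch d)) : Set (Set (Pt d)) := {D | ∃ x ∈ X, D ∈ x}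

/-- `𝒫(X)`: the finite patches contained in tilings of `X`. -/
def Patches {d : ℕ} (X : Set (Patch d)) : Set (Patch d) :=
  {x' | x'.Finite ∧ ∃ x ∈ X, x' ⊆ x}

/-- `𝒫^N(X)`: the patches with `N` tiles contained in tilings of `X`. -/
def PatchesCard {d : ℕ} (X : Set (Patch d)) (N : ℕ) : Set (Patch d) :=
  {x' | x'.Finite ∧ x'.ncard = N ∧ ∃ x ∈ X, x' ⊆ x}

/-- `X` is invariant under the translation action. -/
def TransInvariant {d : ℕ} (X : Set (Patch d)) : Prop :=
  ∀ t : Pt d, ∀ x ∈ X, patchTrans t x ∈ X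

/-- Finite local complexity: for each `N` there are only finitely many `N`-tile patches
in tilings of `X` up to translation. -/
def FLC {d : ℕ} (X : Set (Patch d)) : Prop :=
  ∀ N : ℕ, ∃ F : Finset (Patch d),
    ∀ x' ∈ PatchesCard X N, ∃ y ∈ F, ∃ t : Pt d, patchTrans t y = x'

/-- The tiling metric `d_T`. -/
def dT {d : ℕ} (x y : Patch d) : ℝ :=
  sInf ({Real.sqrt 2 / 2} ∪
    {r : ℝ | 0 < r ∧ r < Real.sqrt 2 / 2 ∧
      ∃ x' ⊆ x, ∃ y' ⊆ y,
        Bornology.IsBounded (psupp x') ∧ Bornology.IsBounded (psupp y') ∧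
        closedBall (0 : Pt d) (1 / r) ⊆ psupp x' ∧
        closedBall (0 : Pt d) (1 / r) ⊆ psupp y' ∧
        ∃ t : Pt d, ‖t‖ ≤ r ∧ patchTrans t x' = y'})

/-- A (self-similar) substitution on the tiles of `X`, with dilatation factor `lam`,
extended tile-by-tile to patches, mapping finite patches of `X` to finite patches of `X`
and tilings of `X` to tilings of `X`. -/
structure Substitution (d : ℕ) (X : Set (Patch d)) where
  map : Set (Pt d) → Patch d
  lam : ℝ
  one_lt_lam : 1 < lam
  supp_eq : ∀ D ∈ TilesOf X, psupp (map D) = (fun p => lam • p) '' D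
  equivar : ∀ (t : Pt d) (D : Set (Pt d)), map (tileTrans t D) = patchTrans (lam • t) (map D)
  maps_patches : ∀ x' ∈ Patches X, (⋃ D ∈ x', map D) ∈ Patches X
  maps_X : ∀ x ∈ X, (⋃ D ∈ x, map D) ∈ X

/-- A substitution applied to a patch, tile by tile. -/
def substPatch {d : ℕ} {X : Set (Patch d)} (S : Substitution d X) (x : Patch d) : Patch d :=
  ⋃ D ∈ x, S.map D

/-- The structure matrix of a substitution with respect to prototiles `Dp`:
entry `(i,j)` is the number of tiles equivalent (translation-equal) to `Dp i` in `S (Dp j)`. -/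
def structMat {d l : ℕ} {X : Set (Patch d)} (Dp : Fin l → Set (Pt d)) (S : Substitution d X) :
    Matrix (Fin l) (Fin l) ℕ :=
  fun i j => {D | D ∈ S.map (Dp j) ∧ ∃ t : Pt d, D = tileTrans t (Dp i)}.ncard

/-- `Dp` is a complete family of pairwise non-equivalent prototiles of `X`. -/
def IsPrototileBasis {d l : ℕ} (X : Set (Patch d)) (Dp : Fin l → Set (Pt d)) : Prop :=
  (∀ i, Dp i ∈ TilesOf X) ∧
  (∀ i j, i ≠ j → ∀ t : Pt d, tileTrans t (Dp i) ≠ Dp j) ∧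
  ∀ D ∈ TilesOf X, ∃ i, ∃ t : Pt d, tileTrans t (Dp i) = D

/-- `S^n_ā = S_{a_1} ∘ S_{a_2} ∘ ⋯ ∘ S_{a_n}` acting on patches (`a 0` plays the role
of `a_1`). -/
def substSeq {d k : ℕ} {X : Set (Patch d)} (S : Fin k → Substitution d X) :
    (ℕ → Fin k) → ℕ → Patch d → Patch d
  | _, 0 => id
  | a, n + 1 => fun x => substPatch (S (a 0)) (substSeq S (fun i => a (i + 1)) n x)

/-- `A^n_ā = A_{a_1} A_{a_2} ⋯ A_{a_n}`. -/
def matSeq {l k : ℕ} (A : Fin k → Matrix (Fin l) (Fin l) ℕ) :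
    (ℕ → Fin k) → ℕ → Matrix (Fin l) (Fin l) ℕ
  | _, 0 => 1
  | a, n + 1 => A (a 0) * matSeq A (fun i => a (i + 1)) n

/-- Primitivity of the sequence of structure matrices `(A_{a_n})`: for every `n` some
product `A_{a_n} A_{a_{n+1}} ⋯ A_{a_{n+N}}` has all entries positive. -/
def SeqPrimitive {l k : ℕ} (A : Fin k → Matrix (Fin l) (Fin l) ℕ) (a : ℕ → Fin k) : Prop :=
  ∀ n : ℕ, ∃ N : ℕ, ∀ p q : Fin l, 0 < matSeq A (fun m => a (n + m)) (N + 1) p q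

/-- The multi-substitution tiling space `X_ā` (with initial tile `D`). -/
def multiSpace {d k : ℕ} {X : Set (Patch d)} (S : Fin k → Substitution d X) (a : ℕ → Fin k)
    (D : Set (Pt d)) : Set (Patch d) :=
  {x | x ∈ X ∧ ∀ x' ⊆ x, x'.Finite →
    ∃ n : ℕ, 0 < n ∧ ∃ t : Pt d, patchTrans t x' ⊆ substSeq S a n {D}}

/-- The substitution tiling space of a single substitution, given by its action
`F` on patches (with initial tile `D`). -/
def substSpaceF {d : ℕ} (X : Set (Patch d)) (F : Patch d → Patch d) (D : Set (Pt d)) :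
    Set (Patch d) :=
  {x | x ∈ X ∧ ∀ x' ⊆ x, x'.Finite →
    ∃ m : ℕ, 0 < m ∧ ∃ t : Pt d, patchTrans t x' ⊆ F^[m] {D}}

open Classical in
/-- The metric on `Σ = {1,…,k}^ℕ`: `d(ā,b̄) = 1/L` where `L` is the least (1-indexed)
position where the sequences differ, and `0` if they are equal. -/
def dSigma {k : ℕ} (a b : ℕ → Fin k) : ℝ :=
  if h : ∃ n, a n ≠ b n then 1 / ((Nat.find h : ℝ) + 1) else 0

/-- The shift `σ` on `Σ`. -/
def seqShift {k : ℕ} (a : ℕ → Fin k) : ℕ → Fin k := fun n => a (n + 1)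

/-- A substitution is recognizable if it is injective on `X`. -/
def Recognizable {d : ℕ} {X : Set (Patch d)} (S : Substitution d X) : Prop :=
  ∀ x ∈ X, ∀ y ∈ X, substPatch S x = substPatch S y → x = y

/-- A substitution is strongly recognizable if it is recognizable and `S(D') ⊆ S(x)`
implies `D' ∈ x` for every tiling `x ∈ X` and tile `D'`. -/
def StronglyRecognizable {d : ℕ} {X : Set (Patch d)} (S : Substitution d X) : Prop :=
  Recognizable S ∧ ∀ x ∈ X, ∀ D' ∈ TilesOf X, S.map D' ⊆ substPatch S x → D' ∈ x

/-- `L_{x'}(y')`: the number of translated copies of `x'` contained in `y'`. -/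
def Lcount {d : ℕ} (x' y' : Patch d) : ℕ := {t : Pt d | patchTrans t x' ⊆ y'}.ncard

/-- The Euclidean volume of the support of a patch. -/
def pvol {d : ℕ} (y' : Patch d) : ℝ := (volume (psupp y')).toReal

/-- `L^x_{x'}(H)`: the number of translated copies of `x'` contained in `x` whose support
is contained in `H`. -/
def LcountIn {d : ℕ} (x x' : Patch d) (H : Set (Pt d)) : ℕ :=
  {t : Pt d | patchTrans t x' ⊆ x ∧ psupp (patchTrans t x') ⊆ H}.ncard

/-- `H^{+r}`: the set of points at distance at most `r` from `H`. -/
def plusR {d : ℕ} (H : Set (Pt d)) (r : ℝ) : Set (Pt d) := {t | ∃ h ∈ H, dist t h ≤ r}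

/-- Van Hove sequence of subsets of `ℝ^d`. -/
def VanHove {d : ℕ} (H : ℕ → Set (Pt d)) : Prop :=
  ∀ r : ℝ, 0 ≤ r →
    Tendsto (fun n => (volume (plusR (frontier (H n)) r)).toReal / (volume (H n)).toReal)
      atTop (nhds 0)

/-- A tiling of `X_ā` which is an increasing union of translates of the supertiles
`S^{k_n}_ā(D)`. -/
def Hierarchical {d k : ℕ} {X : Set (Patch d)} (S : Fin k → Substitution d X) (a : ℕ → Fin k)
    (x : Patch d) : Prop :=
  ∃ (kn : ℕ → ℕ) (tn : ℕ → Pt d) (D : Set (Pt d)), D ∈ TilesOf X ∧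
    Tendsto kn atTop atTop ∧
    (∀ n, patchTrans (tn n) (substSeq S a (kn n) {D}) ⊆
      patchTrans (tn (n + 1)) (substSeq S a (kn (n + 1)) {D})) ∧
    x = ⋃ n, patchTrans (tn n) (substSeq S a (kn n) {D})

/-- The topology on the space of patches generated by the `d_T`-balls. -/
def tilingTopology (d : ℕ) : TopologicalSpace (Patch d) :=
  TopologicalSpace.generateFrom {U | ∃ (x : Patch d) (r : ℝ), 0 < r ∧ U = {y | dT x y < r}}

/-- The Borel σ-algebra associated to the tiling topology. -/
def tilingMeasurable (d : ℕ) : MeasurableSpace (Patch d) :=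
  @borel (Patch d) (tilingTopology d)

/-- A Borel probability measure concentrated on `Y` and invariant under the translation
action. -/
def GoodMeasure {d : ℕ} (Y : Set (Patch d))
    (μ : @MeasureTheory.Measure (Patch d) (tilingMeasurable d)) : Prop :=
  letI := tilingMeasurable d
  μ Set.univ = 1 ∧ μ Yᶜ = 0 ∧
    ∀ (t : Pt d) (s : Set (Patch d)), μ (patchTrans t ⁻¹' s) = μ s

/-- `ν` is the pushforward of `μ` under `F`. -/
def PushForwardEq {d : ℕ} (F : Patch d → Patch d)
    (μ ν : @MeasureTheory.Measure (Patch d) (tilingMeasurable d)) : Prop :=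
  letI := tilingMeasurable d
  ∀ s : Set (Patch d), μ (F ⁻¹' s) = ν s

section Helpers

variable {d k : ℕ} {X : Set (Patch d)}

theorem my_tileTrans_tileTrans (s t : Pt d) (D : Set (Pt d)) :
    tileTrans s (tileTrans t D) = tileTrans (s + t) D := by
  simp only [tileTrans, Set.image_image, add_assoc]

theorem my_patchTrans_patchTrans (s t : Pt d) (x : Patch d) :
    patchTrans s (patchTrans t x) = patchTrans (s + t) x := by
  simp only [patchTrans, Set.image_image, my_tileTrans_tileTrans]

theorem my_patchTrans_singleton (t : Pt d) (D : Set (Pt d)) :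
    patchTrans t {D} = {tileTrans t D} := by
  simp [patchTrans]

theorem my_psupp_mono {x y : Patch d} (h : x ⊆ y) : psupp x ⊆ psupp y := by
  intro p hp
  simp only [psupp, Set.mem_iUnion] at *
  obtain ⟨E, hE, hpE⟩ := hp
  exact ⟨E, h hE, hpE⟩

theorem my_psupp_patchTrans (t : Pt d) (x : Patch d) :
    psupp (patchTrans t x) = tileTrans t (psupp x) := by
  ext p
  simp only [psupp, patchTrans, tileTrans, Set.mem_iUnion, Set.mem_image]
  constructor
  · rintro ⟨E, ⟨F, hF, rfl⟩, ⟨q, hq, rfl⟩⟩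
    exact ⟨q, ⟨F, hF, hq⟩, rfl⟩
  · rintro ⟨q, ⟨F, hF, hq⟩, rfl⟩
    exact ⟨_, ⟨F, hF, rfl⟩, ⟨q, hq, rfl⟩⟩

theorem my_substPatch_mono (Sb : Substitution d X) {x y : Patch d} (h : x ⊆ y) :
    substPatch Sb x ⊆ substPatch Sb y := by
  intro E hE
  simp only [substPatch, Set.mem_iUnion] at *
  obtain ⟨F, hF, hEF⟩ := hE
  exact ⟨F, h hF, hEF⟩

theorem my_substPatch_patchTrans (Sb : Substitution d X) (t : Pt d) (x : Patch d) :
    substPatch Sb (patchTrans t x) = patchTrans (Sb.lam • t) (substPatch Sb x) := by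
  ext E
  simp only [substPatch, patchTrans, Set.mem_iUnion, Set.mem_image]
  constructor
  · rintro ⟨F, ⟨G, hG, rfl⟩, hEF⟩
    rw [Sb.equivar] at hEF
    obtain ⟨H, hH, rfl⟩ := hEF
    exact ⟨H, ⟨G, hG, hH⟩, rfl⟩
  · rintro ⟨H, ⟨G, hG, hH⟩, rfl⟩
    refine ⟨tileTrans t G, ⟨G, hG, rfl⟩, ?_⟩
    rw [Sb.equivar]
    exact ⟨H, hH, rfl⟩

theorem my_substSeq_succ (S : Fin k → Substitution d X) (a : ℕ → Fin k) (n : ℕ) (x : Patch d) :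
    substSeq S a (n + 1) x = substPatch (S (a 0)) (substSeq S (fun i => a (i + 1)) n x) := rfl

theorem my_substSeq_mono (S : Fin k → Substitution d X) (m : ℕ) :
    ∀ (a : ℕ → Fin k) {x y : Patch d}, x ⊆ y → substSeq S a m x ⊆ substSeq S a m y := by
  induction m with
  | zero => intro a x y h; exact h
  | succ n ih => intro a x y h; exact my_substPatch_mono _ (ih _ h)

theorem my_substSeq_patchTrans (S : Fin k → Substitution d X) (m : ℕ) :
    ∀ (a : ℕ → Fin k) (t : Pt d), ∃ t' : Pt d,
      ∀ x : Patch d, substSeq S a m (patchTrans t x) = patchTrans t' (substSeq S a m x) := by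
  induction m with
  | zero => intro a t; exact ⟨t, fun x => rfl⟩
  | succ n ih =>
    intro a t
    obtain ⟨t', ht'⟩ := ih (fun i => a (i + 1)) t
    refine ⟨(S (a 0)).lam • t', fun x => ?_⟩
    rw [my_substSeq_succ, ht', my_substPatch_patchTrans, my_substSeq_succ]

theorem my_substSeq_add (S : Fin k → Substitution d X) (p q : ℕ) :
    ∀ (a : ℕ → Fin k) (x : Patch d),
      substSeq S a (p + q) x = substSeq S a p (substSeq S (fun i => a (i + p)) q x) := by
  induction p with
  | zero => intro a x; rw [Nat.zero_add]; rfl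
  | succ n ih =>
    intro a x
    have h1 : n + 1 + q = (n + q) + 1 := by omega
    rw [h1, my_substSeq_succ, ih, my_substSeq_succ]
    rfl

theorem my_substPatch_biUnion (Sb : Substitution d X) {ι : Type*} (s : Set ι) (f : ι → Patch d) :
    substPatch Sb (⋃ i ∈ s, f i) = ⋃ i ∈ s, substPatch Sb (f i) := by
  ext E
  simp only [substPatch, Set.mem_iUnion]
  tauto

theorem my_substSeq_biUnion (S : Fin k → Substitution d X) (m : ℕ) :
    ∀ (a : ℕ → Fin k) (x : Patch d), substSeq S a m x = ⋃ P ∈ x, substSeq S a m {P} := by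
  induction m with
  | zero =>
    intro a x
    ext E
    simp [substSeq]
  | succ n ih =>
    intro a x
    rw [my_substSeq_succ, ih, my_substPatch_biUnion]
    ext E
    simp only [Set.mem_iUnion]
    constructor
    · rintro ⟨P, hP, hE⟩
      exact ⟨P, hP, by rw [my_substSeq_succ, ih]; simpa using hE⟩
    · rintro ⟨P, hP, hE⟩
      rw [my_substSeq_succ, ih] at hE
      exact ⟨P, hP, by simpa using hE⟩

theorem my_singleton_patches {D : Set (Pt d)} (hD : D ∈ TilesOf X) : ({D} : Patch d) ∈ Patches X := by
  obtain ⟨x, hx, hDx⟩ := hD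
  exact ⟨Set.finite_singleton D, x, hx, by simpa⟩

theorem my_substSeq_patches (S : Fin k → Substitution d X) (m : ℕ) :
    ∀ (a : ℕ → Fin k) {x : Patch d}, x ∈ Patches X → substSeq S a m x ∈ Patches X := by
  induction m with
  | zero => intro a x hx; exact hx
  | succ n ih =>
    intro a x hx
    exact (S (a 0)).maps_patches _ (ih _ hx)

theorem my_mem_tilesOf {y : Patch d} (hy : y ∈ Patches X) {P : Set (Pt d)} (hP : P ∈ y) :
    P ∈ TilesOf X := by
  obtain ⟨_, x, hx, hsub⟩ := hy
  exact ⟨x, hx, hsub hP⟩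

theorem my_psupp_bounded (hX : ∀ x ∈ X, IsTiling x) {y : Patch d} (hy : y ∈ Patches X) :
    Bornology.IsBounded (psupp y) := by
  obtain ⟨hfin, x, hx, hsub⟩ := hy
  refine (Bornology.isBounded_biUnion hfin).2 ?_
  intro E hE
  exact (((hX x hx).1.1 E (hsub hE)).1).isBounded

theorem my_copy_of_pos {l : ℕ} (Dp : Fin l → Set (Pt d)) (S : Fin k → Substitution d X)
    (m : ℕ) :
    ∀ (b : ℕ → Fin k) (i j : Fin l),
      0 < matSeq (fun i => structMat Dp (S i)) b m i j →
      ∃ t : Pt d, tileTrans t (Dp i) ∈ substSeq S b m {Dp j} := by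
  induction m with
  | zero =>
    intro b i j hpos
    simp only [matSeq, Matrix.one_apply] at hpos
    by_cases hij : i = j
    · subst hij
      refine ⟨0, ?_⟩
      have : tileTrans (0 : Pt d) (Dp i) = Dp i := by simp [tileTrans]
      rw [this]
      rfl
    · simp [hij] at hpos
  | succ n ih =>
    intro b i j hpos
    simp only [matSeq, Matrix.mul_apply] at hpos
    have hex : ∃ r : Fin l, 0 < structMat Dp (S (b 0)) i r *
        matSeq (fun i => structMat Dp (S i)) (fun i => b (i + 1)) n r j := by
      by_contra hc
      push_neg at hc
      simp only [Nat.le_zero] at hc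
      rw [Finset.sum_eq_zero (fun r _ => hc r)] at hpos
      exact lt_irrefl 0 hpos
    obtain ⟨r, hr⟩ := hex
    have h1 : 0 < structMat Dp (S (b 0)) i r := Nat.pos_of_mul_pos_left (by rwa [mul_comm] at hr)
    have h2 : 0 < matSeq (fun i => structMat Dp (S i)) (fun i => b (i + 1)) n r j :=
      Nat.pos_of_mul_pos_left hr
    obtain ⟨t, ht⟩ := ih (fun i => b (i + 1)) r j h2
    have hne : {E | E ∈ (S (b 0)).map (Dp r) ∧ ∃ s : Pt d, E = tileTrans s (Dp i)}.Nonempty := by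
      by_contra hc
      rw [Set.not_nonempty_iff_eq_empty] at hc
      simp only [structMat, hc, Set.ncard_empty] at h1
      exact lt_irrefl 0 h1
    obtain ⟨E, hEmem, s, rfl⟩ := hne
    refine ⟨(S (b 0)).lam • t + s, ?_⟩
    rw [my_substSeq_succ]
    have hsub : (S (b 0)).map (tileTrans t (Dp r)) ⊆
        substPatch (S (b 0)) (substSeq S (fun i => b (i + 1)) n {Dp j}) := by
      intro F hF
      simp only [substPatch, Set.mem_iUnion]
      exact ⟨tileTrans t (Dp r), ht, hF⟩
    apply hsub
    rw [(S (b 0)).equivar]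
    have : tileTrans ((S (b 0)).lam • t + s) (Dp i)
        = tileTrans ((S (b 0)).lam • t) (tileTrans s (Dp i)) := by
      rw [my_tileTrans_tileTrans]
    rw [this]
    exact ⟨tileTrans s (Dp i), hEmem, rfl⟩

end Helpers

/-- Lemma `super`: big supertiles contain, inside any ball of radius `R` in their support, a translated copy of `S^n_ā(D)`. -/
theorem supertile_lemma
    {d l k : ℕ} (hd : 0 < d) (hl : 0 < l) (hk : 0 < k)
    (X : Set (Patch d)) (hX : ∀ x ∈ X, IsTiling x)
    (hXinv : TransInvariant X) (hXflc : FLC X)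
    (Dp : Fin l → Set (Pt d)) (hDp : IsPrototileBasis X Dp)
    (S : Fin k → Substitution d X)
    (D : Set (Pt d)) (hD : D ∈ TilesOf X)
    (a : ℕ → Fin k)
    (hprim : SeqPrimitive (fun i => structMat Dp (S i)) a)
    :
    ∀ n : ℕ, 0 < n → ∃ R : ℝ, 0 < R ∧ ∃ N₀ : ℕ, n < N₀ ∧ ∀ N : ℕ, N₀ < N →
      ∀ c : Pt d, closedBall c R ⊆ psupp (substSeq S a N {D}) →
        ∃ t : Pt d, patchTrans t (substSeq S a n {D}) ⊆ substSeq S a N {D} ∧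
          psupp (patchTrans t (substSeq S a n {D})) ⊆ closedBall c R := by
  intro n hn
  obtain ⟨N₁, hN₁⟩ := hprim n
  set M := n + (N₁ + 1) with hM
  obtain ⟨i₀, s₀, hs₀⟩ := hDp.2.2 D hD
  have hcopy : ∀ j : Fin l, ∃ v : Pt d,
      patchTrans v (substSeq S a n {D}) ⊆ substSeq S a M {Dp j} := by
    intro j
    obtain ⟨t, ht⟩ := my_copy_of_pos Dp S (N₁ + 1) (fun m => a (n + m)) i₀ j (hN₁ i₀ j)
    have hD' : tileTrans (t - s₀) D ∈ substSeq S (fun m => a (n + m)) (N₁ + 1) {Dp j} := by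
      rw [← hs₀, my_tileTrans_tileTrans, sub_add_cancel]
      exact ht
    obtain ⟨v, hv⟩ := my_substSeq_patchTrans S n a (t - s₀)
    refine ⟨v, ?_⟩
    rw [← hv {D}]
    have hseq : (fun i => a (i + n)) = (fun m => a (n + m)) := by
      funext i; rw [Nat.add_comm]
    calc substSeq S a n (patchTrans (t - s₀) {D})
        ⊆ substSeq S a n (substSeq S (fun m => a (n + m)) (N₁ + 1) {Dp j}) := by
          apply my_substSeq_mono
          rw [my_patchTrans_singleton]
          exact Set.singleton_subset_iff.2 hD'
      _ = substSeq S a M {Dp j} := by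
          rw [hM, my_substSeq_add S n (N₁ + 1) a ({Dp j} : Patch d), hseq]
  choose v hv using hcopy
  have hpatchj : ∀ j : Fin l, substSeq S a M {Dp j} ∈ Patches X := fun j =>
    my_substSeq_patches S M a (my_singleton_patches (hDp.1 j))
  have hbd : Bornology.IsBounded (⋃ j : Fin l, psupp (substSeq S a M {Dp j})) :=
    Bornology.isBounded_iUnion.2 fun j => my_psupp_bounded hX (hpatchj j)
  obtain ⟨r, hr⟩ := hbd.subset_closedBall 0
  refine ⟨2 * max r 0 + 1, by positivity, M, by omega, ?_⟩
  intro N hNM c hball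
  have hc : c ∈ psupp (substSeq S a N {D}) :=
    hball (Metric.mem_closedBall_self (by positivity))
  have hsplit : substSeq S a N {D}
      = substSeq S a M (substSeq S (fun i => a (i + M)) (N - M) {D}) := by
    have h := my_substSeq_add S M (N - M) a ({D} : Patch d)
    rw [show M + (N - M) = N by omega] at h
    exact h
  set Y := substSeq S (fun i => a (i + M)) (N - M) ({D} : Patch d) with hY
  have hYP : Y ∈ Patches X := my_substSeq_patches S _ _ (my_singleton_patches hD)
  have hc2 : c ∈ ⋃ P ∈ Y, psupp (substSeq S a M {P}) := by
    rw [hsplit, my_substSeq_biUnion S M a Y] at hc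
    simp only [psupp, Set.mem_iUnion] at hc ⊢
    obtain ⟨E, ⟨P, hP, hEP⟩, hcE⟩ := hc
    exact ⟨P, hP, E, hEP, hcE⟩
  simp only [Set.mem_iUnion] at hc2
  obtain ⟨P, hPY, hcP⟩ := hc2
  have hPX : P ∈ TilesOf X := my_mem_tilesOf hYP hPY
  obtain ⟨j, s, hsj⟩ := hDp.2.2 P hPX
  obtain ⟨w, hw⟩ := my_substSeq_patchTrans S M a s
  have hsuper : substSeq S a M {P} = patchTrans w (substSeq S a M {Dp j}) := by
    rw [← hsj, ← my_patchTrans_singleton, hw]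
  have hincl : patchTrans (w + v j) (substSeq S a n {D}) ⊆ substSeq S a M {P} := by
    rw [← my_patchTrans_patchTrans, hsuper]
    exact Set.image_mono (hv j)
  refine ⟨w + v j, ?_, ?_⟩
  · refine hincl.trans ?_
    rw [hsplit]
    exact my_substSeq_mono S M a (Set.singleton_subset_iff.2 hPY)
  · intro q hq
    have hq2 : q ∈ psupp (substSeq S a M {P}) := my_psupp_mono hincl hq
    rw [hsuper, my_psupp_patchTrans] at hq2 hcP
    simp only [tileTrans, Set.mem_image] at hq2 hcP
    obtain ⟨p, hp, rfl⟩ := hq2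
    obtain ⟨p', hp', hc'⟩ := hcP
    have hpB : p ∈ Metric.closedBall (0 : Pt d) r := hr (Set.mem_iUnion.2 ⟨j, hp⟩)
    have hp'B : p' ∈ Metric.closedBall (0 : Pt d) r := hr (Set.mem_iUnion.2 ⟨j, hp'⟩)
    rw [Metric.mem_closedBall, ← hc', dist_add_left]
    have h1 : dist p p' ≤ dist p 0 + dist 0 p' := dist_triangle _ _ _
    have h2 : dist p 0 ≤ r := Metric.mem_closedBall.1 hpB
    have h3 : dist 0 p' ≤ r := by rw [dist_comm]; exact Metric.mem_closedBall.1 hp'B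
    have h4 : r ≤ max r 0 := le_max_left _ _
    linarith


end
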